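/- Consider the optimization: minimize E = Σᵢ Fᵢ(Pᵢ)·tᵢ over transmit powers P₁,…,P₄ ≥ 0 and durations t₁, t₂ ≥ 0 with t₁ + t₂ ≤ T, subject to rate constraints of the form (tₖ/T)·W·log₂(1 + Pᵢ·gᵢ/(Pⱼ·qⱼ + σ²)) ≥ Rₖ, where each Fᵢ is strictly increasing, gᵢ, σ² > 0 and qⱼ ≥ 0. Then at any optimal solution all four rate constraints hold with equality. -/

import Mathlib

/-- Feasibility for the FD-TWR-2TS energy minimization: nonnegative powers and
durations, total duration at most `T`, and the four rate constraints. -/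
def Feasible12 (T W σ2 : ℝ) (g q Rreq : Fin 4 → ℝ) (slot : Fin 4 → Fin 2)
    (pw intf : Fin 4 → Fin 4) (P : Fin 4 → ℝ) (t : Fin 2 → ℝ) : Prop :=
  (∀ i, 0 ≤ P i) ∧ (∀ k, 0 ≤ t k) ∧ t 0 + t 1 ≤ T ∧
  ∀ ℓ : Fin 4,
    (t (slot ℓ) / T) * W *
        Real.logb 2 (1 + P (pw ℓ) * g ℓ / (P (intf ℓ) * q ℓ + σ2)) ≥ Rreq ℓ

/-- The total energy `Σᵢ Fᵢ(Pᵢ)·tᵢ`, where power `pw ℓ` is used during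
timeslot `slot ℓ` (each power is transmitted in exactly one constraint). -/
def Energy12 (F : Fin 4 → ℝ → ℝ) (slot : Fin 4 → Fin 2) (pw : Fin 4 → Fin 4)
    (P : Fin 4 → ℝ) (t : Fin 2 → ℝ) : ℝ :=
  ∑ ℓ : Fin 4, F (pw ℓ) (P (pw ℓ)) * t (slot ℓ)

theorem stmt_12 (T W σ2 : ℝ) (hT : 0 < T) (hW : 0 < W) (hσ2 : 0 < σ2)
    (g q Rreq : Fin 4 → ℝ) (hg : ∀ ℓ, 0 < g ℓ) (hq : ∀ ℓ, 0 ≤ q ℓ)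
    (hR : ∀ ℓ, 0 < Rreq ℓ)
    (F : Fin 4 → ℝ → ℝ) (hF : ∀ i, StrictMono (F i))
    (slot : Fin 4 → Fin 2) (pw intf : Fin 4 → Fin 4) (hpw : Function.Bijective pw)
    (P : Fin 4 → ℝ) (t : Fin 2 → ℝ)
    (hfeas : Feasible12 T W σ2 g q Rreq slot pw intf P t)
    (hopt : ∀ P' t', Feasible12 T W σ2 g q Rreq slot pw intf P' t' →
      Energy12 F slot pw P t ≤ Energy12 F slot pw P' t') :
    ∀ ℓ : Fin 4,
      (t (slot ℓ) / T) * W *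
          Real.logb 2 (1 + P (pw ℓ) * g ℓ / (P (intf ℓ) * q ℓ + σ2)) = Rreq ℓ := by
  obtain ⟨hP, ht, hsum, hcon⟩ := hfeas
  intro ℓ
  by_contra hne
  have hgt : Rreq ℓ <
      (t (slot ℓ) / T) * W *
        Real.logb 2 (1 + P (pw ℓ) * g ℓ / (P (intf ℓ) * q ℓ + σ2)) :=
    lt_of_le_of_ne (hcon ℓ) (Ne.symm hne)
  -- basic positivity facts
  have htpos : 0 < t (slot ℓ) := by
    rcases (ht (slot ℓ)).lt_or_eq with h | h
    · exact h
    · exfalso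
      have := hcon ℓ
      rw [← h] at this
      simp at this
      nlinarith [hR ℓ]
  have hDen : 0 < P (intf ℓ) * q ℓ + σ2 := by
    have := mul_nonneg (hP (intf ℓ)) (hq ℓ); linarith
  have ha : 0 < t (slot ℓ) / T * W := by positivity
  set c : ℝ := Rreq ℓ * T / (t (slot ℓ) * W) with hc
  have hcpos : 0 < c := by
    rw [hc]
    exact div_pos (mul_pos (hR ℓ) hT) (mul_pos htpos hW)
  have hceq : t (slot ℓ) / T * W * c = Rreq ℓ := by
    field_simp [hc]
    rw [hc]; field_simp
  -- logb is strictly above c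
  have hlog : c < Real.logb 2 (1 + P (pw ℓ) * g ℓ / (P (intf ℓ) * q ℓ + σ2)) := by
    by_contra hle
    push_neg at hle
    have := mul_le_mul_of_nonneg_left hle ha.le
    rw [hceq] at this
    linarith
  have h2 : (1 : ℝ) < 2 := one_lt_two
  have hx1 : (1 : ℝ) ≤ 1 + P (pw ℓ) * g ℓ / (P (intf ℓ) * q ℓ + σ2) := by
    have : 0 ≤ P (pw ℓ) * g ℓ / (P (intf ℓ) * q ℓ + σ2) := by
      apply div_nonneg (mul_nonneg (hP (pw ℓ)) (hg ℓ).le) hDen.le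
    linarith
  have hxpos : (0 : ℝ) < 1 + P (pw ℓ) * g ℓ / (P (intf ℓ) * q ℓ + σ2) := by linarith
  -- convert the log inequality into an inequality on the SINR
  have hrpow : (2 : ℝ) ^ c < 1 + P (pw ℓ) * g ℓ / (P (intf ℓ) * q ℓ + σ2) := by
    have := (Real.rpow_lt_rpow_left_iff h2).mpr hlog
    rwa [Real.rpow_logb (by norm_num) (by norm_num) hxpos] at this
  set D : ℝ := (2 : ℝ) ^ c - 1 with hD
  have hDpos : 0 < D := by
    have : (1 : ℝ) < (2 : ℝ) ^ c := by
      have := Real.rpow_lt_rpow_left_iff (x := (2 : ℝ)) h2 |>.mpr hcpos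
      simpa using this
    simp [hD]; linarith
  set Pnew : ℝ := (P (intf ℓ) * q ℓ + σ2) * D / g ℓ with hPnew
  have hPnew_nonneg : 0 ≤ Pnew := by
    rw [hPnew]
    exact div_nonneg (mul_nonneg hDen.le hDpos.le) (hg ℓ).le
  have hPnew_lt : Pnew < P (pw ℓ) := by
    have h1 : D < P (pw ℓ) * g ℓ / (P (intf ℓ) * q ℓ + σ2) := by
      simp only [hD]; linarith
    rw [lt_div_iff₀ hDen] at h1
    rw [hPnew, div_lt_iff₀ (hg ℓ)]
    nlinarith
  set P' : Fin 4 → ℝ := Function.update P (pw ℓ) Pnew with hP'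
  have hP'le : ∀ i, P' i ≤ P i := by
    intro i
    by_cases hi : i = pw ℓ
    · subst hi; simp [hP', hPnew_lt.le]
    · simp [hP', Function.update_of_ne hi]
  have hP'nonneg : ∀ i, 0 ≤ P' i := by
    intro i
    by_cases hi : i = pw ℓ
    · subst hi; simp [hP', hPnew_nonneg]
    · simp [hP', Function.update_of_ne hi]; exact hP i
  -- feasibility of the new point
  have hfeas' : Feasible12 T W σ2 g q Rreq slot pw intf P' t := by
    refine ⟨hP'nonneg, ht, hsum, ?_⟩
    intro ℓ'
    have hDen' : 0 < P' (intf ℓ') * q ℓ' + σ2 := by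
      have := mul_nonneg (hP'nonneg (intf ℓ')) (hq ℓ'); linarith
    have hDenle : P' (intf ℓ') * q ℓ' + σ2 ≤ P (intf ℓ') * q ℓ' + σ2 := by
      have := mul_le_mul_of_nonneg_right (hP'le (intf ℓ')) (hq ℓ'); linarith
    by_cases hl : ℓ' = ℓ
    · subst hl
      -- tight constraint with new power, still ≥ since denominator only shrinks
      have hnum : P' (pw ℓ') = Pnew := by simp [hP']
      have hPg : Pnew * g ℓ' = (P (intf ℓ') * q ℓ' + σ2) * D := by
        rw [hPnew, div_mul_cancel₀ _ (hg ℓ').ne']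
      have hS : D ≤ P' (pw ℓ') * g ℓ' / (P' (intf ℓ') * q ℓ' + σ2) := by
        rw [hnum, le_div_iff₀ hDen', hPg]
        nlinarith [mul_le_mul_of_nonneg_left hDenle hDpos.le]
      have hlogge : c ≤ Real.logb 2 (1 + P' (pw ℓ') * g ℓ' / (P' (intf ℓ') * q ℓ' + σ2)) := by
        have hxe : (2 : ℝ) ^ c ≤ 1 + P' (pw ℓ') * g ℓ' / (P' (intf ℓ') * q ℓ' + σ2) := by
          simp only [hD] at hS; linarith
        calc c = Real.logb 2 ((2 : ℝ) ^ c) := (Real.logb_rpow (by norm_num) (by norm_num)).symm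
          _ ≤ _ := Real.logb_le_logb_of_le h2 (by positivity) hxe
      have := mul_le_mul_of_nonneg_left hlogge ha.le
      rw [hceq] at this
      exact this
    · -- other constraints: transmit power unchanged, interference only shrinks
      have hnum : P' (pw ℓ') = P (pw ℓ') := by
        have : pw ℓ' ≠ pw ℓ := fun h => hl (hpw.injective h)
        simp [hP', Function.update_of_ne this]
      have hSle : P (pw ℓ') * g ℓ' / (P (intf ℓ') * q ℓ' + σ2)
          ≤ P' (pw ℓ') * g ℓ' / (P' (intf ℓ') * q ℓ' + σ2) := by
        rw [hnum]
        apply div_le_div_of_nonneg_left (mul_nonneg (hP (pw ℓ')) (hg ℓ').le) hDen' hDenle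
      have hx1' : (1 : ℝ) ≤ 1 + P (pw ℓ') * g ℓ' / (P (intf ℓ') * q ℓ' + σ2) := by
        have hd : 0 < P (intf ℓ') * q ℓ' + σ2 := by
          have := mul_nonneg (hP (intf ℓ')) (hq ℓ'); linarith
        have : 0 ≤ P (pw ℓ') * g ℓ' / (P (intf ℓ') * q ℓ' + σ2) :=
          div_nonneg (mul_nonneg (hP (pw ℓ')) (hg ℓ').le) hd.le
        linarith
      have hlogle := Real.logb_le_logb_of_le h2 (by linarith) (by linarith : 
          1 + P (pw ℓ') * g ℓ' / (P (intf ℓ') * q ℓ' + σ2)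
          ≤ 1 + P' (pw ℓ') * g ℓ' / (P' (intf ℓ') * q ℓ' + σ2))
      have ha' : 0 ≤ t (slot ℓ') / T * W := by
        have := ht (slot ℓ'); positivity
      have := mul_le_mul_of_nonneg_left hlogle ha'
      exact le_trans (hcon ℓ') this
  -- the new point has strictly smaller energy
  have hlt : Energy12 F slot pw P' t < Energy12 F slot pw P t := by
    unfold Energy12
    apply Finset.sum_lt_sum
    · intro i _
      by_cases hi : i = ℓ
      · subst hi
        have : P' (pw i) = Pnew := by simp [hP']
        rw [this]
        exact mul_le_mul_of_nonneg_right ((hF (pw i)).le_iff_le.mpr hPnew_lt.le)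
          (ht (slot i))
      · have hne' : pw i ≠ pw ℓ := fun h => hi (hpw.injective h)
        rw [show P' (pw i) = P (pw i) by simp [hP', Function.update_of_ne hne']]
    · refine ⟨ℓ, Finset.mem_univ _, ?_⟩
      have : P' (pw ℓ) = Pnew := by simp [hP']
      rw [this]
      exact mul_lt_mul_of_pos_right (hF (pw ℓ) hPnew_lt) htpos
  exact absurd (hopt P' t hfeas') (not_le.mpr hlt)
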